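/- Let R be an invertible n²×n² complex matrix. If there exists an invertible n×n matrix μ such that (PR, μ) is an enhanced R-matrix in the sense of Definition 2, then R is biinvertible and VU = I, where U and V are the n×n matrices built from R̃ = ((R^{t₂})⁻¹)^{t₂}. Likewise, if there exists an invertible n×n matrix ν such that (RP, ν) is an enhanced R-matrix in the sense of Definition 2, then R is biinvertible and VU = I. -/

import Mathlib

open scoped BigOperators

namespace Enhance

noncomputable section

/-- n×n complex matrices. -/
abbrev Mat1 (n : ℕ) := Matrix (Fin n) (Fin n) ℂ

/-- n²×n² complex matrices, indexed by pairs. -/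
abbrev Mat2 (n : ℕ) := Matrix (Fin n × Fin n) (Fin n × Fin n) ℂ

/-- n³×n³ complex matrices, indexed by triples. -/
abbrev Mat3 (n : ℕ) := Matrix (Fin n × Fin n × Fin n) (Fin n × Fin n × Fin n) ℂ

/-- Kronecker product of two n×n matrices: (μ⊗ν)^{ab}_{cd} = μ^a_c ν^b_d. -/
def kron {n : ℕ} (μ ν : Mat1 n) : Mat2 n :=
  Matrix.of fun p q => μ p.1 q.1 * ν p.2 q.2

/-- The permutation matrix P^{ab}_{cd} = δ^a_d δ^b_c. -/
def Pmat (n : ℕ) : Mat2 n :=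
  Matrix.of fun p q => if p.1 = q.2 ∧ p.2 = q.1 then 1 else 0

/-- A₁₂ = A ⊗ I. -/
def A12 {n : ℕ} (A : Mat2 n) : Mat3 n :=
  Matrix.of fun p q => A (p.1, p.2.1) (q.1, q.2.1) * (if p.2.2 = q.2.2 then 1 else 0)

/-- A₂₃ = I ⊗ A. -/
def A23 {n : ℕ} (A : Mat2 n) : Mat3 n :=
  Matrix.of fun p q => (if p.1 = q.1 then 1 else 0) * A (p.2.1, p.2.2) (q.2.1, q.2.2)

/-- (A₁₃)^{abc}_{def} = A^{ac}_{df} δ^b_e. -/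
def A13 {n : ℕ} (A : Mat2 n) : Mat3 n :=
  Matrix.of fun p q => A (p.1, p.2.2) (q.1, q.2.2) * (if p.2.1 = q.2.1 then 1 else 0)

/-- First partial transpose: (A^{t₁})^{ab}_{cd} = A^{cb}_{ad}. -/
def t1 {n : ℕ} (A : Mat2 n) : Mat2 n :=
  Matrix.of fun p q => A (q.1, p.2) (p.1, q.2)

/-- Second partial transpose: (A^{t₂})^{ab}_{cd} = A^{ad}_{cb}. -/
def t2 {n : ℕ} (A : Mat2 n) : Mat2 n :=
  Matrix.of fun p q => A (p.1, q.2) (q.1, p.2)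

/-- Second partial trace: Tr₂(A)^a_c = Σ_d A^{ad}_{cd}. -/
def Tr2 {n : ℕ} (A : Mat2 n) : Mat1 n :=
  Matrix.of fun a c => ∑ d, A (a, d) (c, d)

/-- The quantum Yang–Baxter equation R₁₂R₁₃R₂₃ = R₂₃R₁₃R₁₂. -/
def QYB {n : ℕ} (R : Mat2 n) : Prop :=
  A12 R * A13 R * A23 R = A23 R * A13 R * A12 R

/-- The braid equation S₁₂S₂₃S₁₂ = S₂₃S₁₂S₂₃. -/
def Braid {n : ℕ} (S : Mat2 n) : Prop :=
  A12 S * A23 S * A12 S = A23 S * A12 S * A23 S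

/-- R is biinvertible if both R and R^{t₂} are invertible. -/
def Biinv {n : ℕ} (R : Mat2 n) : Prop :=
  IsUnit R ∧ IsUnit (t2 R)

/-- R̃ = ((R^{t₂})⁻¹)^{t₂}. -/
noncomputable def Rtil {n : ℕ} (R : Mat2 n) : Mat2 n := t2 (t2 R)⁻¹

/-- U^i_j = Σ_a R̃^{ai}_{ja}. -/
noncomputable def Umat {n : ℕ} (R : Mat2 n) : Mat1 n :=
  Matrix.of fun i j => ∑ a, Rtil R (a, i) (j, a)

/-- V^i_j = Σ_a R̃^{ia}_{aj}. -/
noncomputable def Vmat {n : ℕ} (R : Mat2 n) : Mat1 n :=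
  Matrix.of fun i j => ∑ a, Rtil R (i, a) (a, j)

/-- Enhanced R-matrix in the sense of Definition 2 (Turaev, tangle category version). -/
def IsEnhanced2 {n : ℕ} (S : Mat2 n) (μ : Mat1 n) : Prop :=
  IsUnit S ∧ IsUnit μ ∧ Braid S ∧
  S * kron μ μ = kron μ μ * S ∧
  Tr2 (S * kron 1 μ) = 1 ∧ Tr2 (S⁻¹ * kron 1 μ) = 1 ∧
  t1 (Pmat n * S⁻¹) * kron 1 μ * t1 (S * Pmat n) * kron 1 μ⁻¹ = 1 ∧
  t1 (Pmat n * S) * kron 1 μ * t1 (S⁻¹ * Pmat n) * kron 1 μ⁻¹ = 1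

/-- Enhanced R-matrix in the sense of Definition 1 (Turaev, link invariant version). -/
def IsEnhanced1 {n : ℕ} (S : Mat2 n) (μ : Mat1 n) (α β : ℂ) : Prop :=
  IsUnit S ∧ α ≠ 0 ∧ β ≠ 0 ∧ Braid S ∧
  S * kron μ μ = kron μ μ * S ∧
  Tr2 (S * kron μ μ) = (α * β) • μ ∧
  Tr2 (S⁻¹ * kron μ μ) = (α⁻¹ * β) • μ


open Matrix

section Helpers

variable {n : ℕ}

lemma Pmat_mul_apply (X : Mat2 n) (p q : Fin n × Fin n) :
    (Pmat n * X) p q = X (p.2, p.1) q := by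
  rw [Matrix.mul_apply, Fintype.sum_prod_type]
  simp [Pmat, Matrix.one_apply, ite_and]

lemma mul_Pmat_apply (X : Mat2 n) (p q : Fin n × Fin n) :
    (X * Pmat n) p q = X p (q.2, q.1) := by
  rw [Matrix.mul_apply, Fintype.sum_prod_type]
  simp [Pmat, ite_and]

lemma Pmat_mul_Pmat : Pmat n * Pmat n = 1 := by
  ext p q
  rw [Pmat_mul_apply]
  simp [Pmat, Matrix.one_apply, Prod.ext_iff, and_comm]

lemma t1_t1 (A : Mat2 n) : t1 (t1 A) = A := by
  ext ⟨a,b⟩ ⟨c,d⟩; simp [t1]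

lemma t2_eq_t1_transpose (A : Mat2 n) : t2 A = (t1 A)ᵀ := by
  ext ⟨a,b⟩ ⟨c,d⟩; simp [t1, t2, Matrix.transpose_apply]

lemma t2_transpose (A : Mat2 n) : t2 (Aᵀ) = t1 A := by
  ext ⟨a,b⟩ ⟨c,d⟩; simp [t1, t2, Matrix.transpose_apply]

lemma kron_one_mul_apply (ν : Mat1 n) (X : Mat2 n) (p q : Fin n × Fin n) :
    (kron 1 ν * X) p q = ∑ f, ν p.2 f * X (p.1, f) q := by
  rw [Matrix.mul_apply, Fintype.sum_prod_type]
  simp [kron, Matrix.one_apply, ite_mul, zero_mul]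

lemma mul_kron_one_apply (ν : Mat1 n) (X : Mat2 n) (p q : Fin n × Fin n) :
    (X * kron 1 ν) p q = ∑ f, X p (q.1, f) * ν f q.2 := by
  rw [Matrix.mul_apply, Fintype.sum_prod_type]
  simp [kron, Matrix.one_apply, mul_ite, mul_zero, mul_comm]

lemma t1_mul_kron (A : Mat2 n) (ν : Mat1 n) : t1 (A * kron 1 ν) = t1 A * kron 1 ν := by
  ext ⟨a,b⟩ ⟨c,d⟩
  simp only [t1, Matrix.of_apply, mul_kron_one_apply]

lemma kron_mul_t1 (ν : Mat1 n) (A : Mat2 n) : t1 (kron 1 ν * A) = kron 1 ν * t1 A := by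
  ext ⟨a,b⟩ ⟨c,d⟩
  simp only [t1, Matrix.of_apply, kron_one_mul_apply]

lemma sum_rot3 {ι : Type*} [Fintype ι] (F : ι → ι → ι → ℂ) :
    ∑ a, ∑ b, ∑ l, F a b l = ∑ l, ∑ a, ∑ b, F a b l :=
  calc ∑ a, ∑ b, ∑ l, F a b l = ∑ a, ∑ l, ∑ b, F a b l :=
        Finset.sum_congr rfl fun _ _ => Finset.sum_comm
    _ = ∑ l, ∑ a, ∑ b, F a b l := Finset.sum_comm

lemma sum_swap4 {ι : Type*} [Fintype ι] (F : ι → ι → ι → ι → ℂ) :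
    ∑ c, ∑ d, ∑ a, ∑ b, F a b c d = ∑ a, ∑ b, ∑ c, ∑ d, F a b c d :=
  calc ∑ c, ∑ d, ∑ a, ∑ b, F a b c d
      = ∑ c, ∑ a, ∑ b, ∑ d, F a b c d :=
        Finset.sum_congr rfl fun c _ => (sum_rot3 fun a b d => F a b c d).symm
    _ = ∑ a, ∑ b, ∑ c, ∑ d, F a b c d := (sum_rot3 fun a b c => ∑ d, F a b c d).symm

lemma mu_contract {n : ℕ} (μ : Mat1 n) (Bmat Amat : Mat2 n) (hBA : Bmat * Amat = 1)
    (g h : Fin n) :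
    ∑ c, ∑ d, (∑ a, ∑ b, μ a b * Bmat (a,b) (c,d)) * Amat (c,d) (g,h) = μ g h := by
  have key1 : ∑ a, ∑ b, μ a b * ((Bmat * Amat) (a,b) (g,h)) = μ g h := by
    rw [hBA]
    simp [Matrix.one_apply, Prod.ext_iff, ite_and, mul_ite, mul_one, mul_zero]
  have expand : ∀ a b : Fin n, (Bmat * Amat) (a,b) (g,h)
      = ∑ c, ∑ d, Bmat (a,b) (c,d) * Amat (c,d) (g,h) := by
    intro a b
    rw [Matrix.mul_apply, Fintype.sum_prod_type]
  calc ∑ c, ∑ d, (∑ a, ∑ b, μ a b * Bmat (a,b) (c,d)) * Amat (c,d) (g,h)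
      = ∑ c, ∑ d, ∑ a, ∑ b, μ a b * Bmat (a,b) (c,d) * Amat (c,d) (g,h) := by
        refine Finset.sum_congr rfl fun c _ => Finset.sum_congr rfl fun d _ => ?_
        rw [Finset.sum_mul]
        exact Finset.sum_congr rfl fun a _ => Finset.sum_mul _ _ _
    _ = ∑ a, ∑ b, ∑ c, ∑ d, μ a b * Bmat (a,b) (c,d) * Amat (c,d) (g,h) := sum_swap4 _
    _ = ∑ a, ∑ b, μ a b * ((Bmat * Amat) (a,b) (g,h)) := by
        refine Finset.sum_congr rfl fun a _ => Finset.sum_congr rfl fun b _ => ?_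
        rw [expand, Finset.mul_sum]
        refine Finset.sum_congr rfl fun c _ => ?_
        rw [Finset.mul_sum]
        exact Finset.sum_congr rfl fun d _ => mul_assoc _ _ _
    _ = μ g h := key1

lemma trace_contract {n : ℕ} (Bmat Amat : Mat2 n) (hBA : Bmat * Amat = 1) (a b : Fin n) :
    ∑ g, ∑ c, ∑ d, Bmat (a,b) (c,d) * Amat (c,d) (g,g) = if a = b then 1 else 0 := by
  have key1 : ∑ g, (Bmat * Amat) (a,b) (g,g) = if a = b then (1:ℂ) else 0 := by
    rw [hBA]
    simp only [Matrix.one_apply, Prod.mk.injEq]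
    rcases eq_or_ne a b with rfl | hab
    · simp
    · rw [if_neg hab]
      refine Finset.sum_eq_zero fun g _ => ?_
      rw [if_neg]
      rintro ⟨rfl, h2⟩
      exact hab h2.symm
  calc ∑ g, ∑ c, ∑ d, Bmat (a,b) (c,d) * Amat (c,d) (g,g)
      = ∑ g, (Bmat * Amat) (a,b) (g,g) := by
        refine Finset.sum_congr rfl fun g _ => ?_
        rw [Matrix.mul_apply, Fintype.sum_prod_type]
    _ = if a = b then 1 else 0 := key1

end Helpers


theorem enhancement_necessary (n : ℕ) (hn : 1 ≤ n) (R : Mat2 n)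
    (hR : IsUnit R) :
    (∀ μ : Mat1 n, IsEnhanced2 (Pmat n * R) μ →
      Biinv R ∧ Vmat R * Umat R = 1) ∧
    (∀ ν : Mat1 n, IsEnhanced2 (R * Pmat n) ν →
      Biinv R ∧ Vmat R * Umat R = 1) := by
  have hRdet : IsUnit R.det := (Matrix.isUnit_iff_isUnit_det R).mp hR
  constructor
  · -- Case S = P * R
    intro μ h
    obtain ⟨hS, hμ, -, -, htr1, htr2, hc7, hc8⟩ := h
    have hμdet : IsUnit μ.det := (Matrix.isUnit_iff_isUnit_det μ).mp hμ
    have hμinv : μ * μ⁻¹ = 1 := Matrix.mul_nonsing_inv μ hμdet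
    have hinvμ : μ⁻¹ * μ = 1 := Matrix.nonsing_inv_mul μ hμdet
    have hSinv : (Pmat n * R)⁻¹ = R⁻¹ * Pmat n := by
      apply Matrix.inv_eq_right_inv
      rw [Matrix.mul_assoc, ← Matrix.mul_assoc R, Matrix.mul_nonsing_inv R hRdet,
        Matrix.one_mul, Pmat_mul_Pmat]
    have e1 : Pmat n * (Pmat n * R) = R := by
      rw [← Matrix.mul_assoc, Pmat_mul_Pmat, Matrix.one_mul]
    have e2 : (Pmat n * R)⁻¹ * Pmat n = R⁻¹ := by
      rw [hSinv, Matrix.mul_assoc, Pmat_mul_Pmat, Matrix.mul_one]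
    rw [e1, e2] at hc8
    -- hc8 : t1 R * kron 1 μ * t1 R⁻¹ * kron 1 μ⁻¹ = 1
    have hc8' : t1 R * (kron 1 μ * t1 R⁻¹ * kron 1 μ⁻¹) = 1 := by
      rw [← Matrix.mul_assoc, ← Matrix.mul_assoc]; exact hc8
    have hUt1 : IsUnit (t1 R) := (Matrix.isUnit_iff_isUnit_det _).mpr (Matrix.isUnit_det_of_right_inverse hc8')
    have hUt2 : IsUnit (t2 R) := by
      rw [t2_eq_t1_transpose, Matrix.isUnit_iff_isUnit_det, Matrix.det_transpose,
        ← Matrix.isUnit_iff_isUnit_det]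
      exact hUt1
    refine ⟨⟨hR, hUt2⟩, ?_⟩
    have ht1Rinv : (t1 R)⁻¹ = kron 1 μ * t1 R⁻¹ * kron 1 μ⁻¹ :=
      Matrix.inv_eq_right_inv hc8'
    have hRtil : Rtil R = kron 1 μ * R⁻¹ * kron 1 μ⁻¹ := by
      have h1 : (t2 R)⁻¹ = ((t1 R)⁻¹)ᵀ := by
        rw [t2_eq_t1_transpose]
        exact (Matrix.transpose_nonsing_inv (t1 R)).symm
      unfold Rtil
      rw [h1, t2_transpose, ht1Rinv, t1_mul_kron, kron_mul_t1, t1_t1]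
    have hRtilE : ∀ a b c d : Fin n, Rtil R (a,b) (c,d)
        = ∑ h, (∑ f, μ b f * R⁻¹ (a,f) (c,h)) * μ⁻¹ h d := by
      intro a b c d
      rw [hRtil, mul_kron_one_apply]
      exact Finset.sum_congr rfl fun h _ => by rw [kron_one_mul_apply]
    -- trace identities
    have hT1 : ∀ a c : Fin n, ∑ d, ∑ f, R (d,a) (c,f) * μ f d = (1 : Mat1 n) a c := by
      intro a c
      have h := congrFun (congrFun htr1 a) c
      rw [← h]
      simp only [Tr2, Matrix.of_apply]
      refine Finset.sum_congr rfl fun d _ => ?_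
      rw [mul_kron_one_apply]
      exact Finset.sum_congr rfl fun f _ => by rw [Pmat_mul_apply]
    have hT2 : ∀ a c : Fin n, ∑ d, ∑ f, R⁻¹ (a,d) (f,c) * μ f d = (1 : Mat1 n) a c := by
      intro a c
      have h := congrFun (congrFun htr2 a) c
      rw [hSinv] at h
      rw [← h]
      simp only [Tr2, Matrix.of_apply]
      refine Finset.sum_congr rfl fun d _ => ?_
      rw [mul_kron_one_apply]
      exact Finset.sum_congr rfl fun f _ => by rw [mul_Pmat_apply]
    -- V = μ⁻¹
    have hV : Vmat R = μ⁻¹ := by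
      ext i j
      show ∑ a, Rtil R (i,a) (a,j) = μ⁻¹ i j
      have key : ∀ h : Fin n, ∑ a, ∑ f, μ a f * R⁻¹ (i,f) (a,h) = (1 : Mat1 n) i h := by
        intro h
        rw [Finset.sum_comm, ← hT2 i h]
        exact Finset.sum_congr rfl fun f _ => Finset.sum_congr rfl fun a _ => mul_comm _ _
      calc ∑ a, Rtil R (i,a) (a,j)
          = ∑ a, ∑ h, (∑ f, μ a f * R⁻¹ (i,f) (a,h)) * μ⁻¹ h j :=
            Finset.sum_congr rfl fun a _ => hRtilE i a a j
        _ = ∑ h, ∑ a, (∑ f, μ a f * R⁻¹ (i,f) (a,h)) * μ⁻¹ h j := Finset.sum_comm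
        _ = ∑ h, (∑ a, ∑ f, μ a f * R⁻¹ (i,f) (a,h)) * μ⁻¹ h j :=
            Finset.sum_congr rfl fun h _ => (Finset.sum_mul _ _ _).symm
        _ = ∑ h, (1 : Mat1 n) i h * μ⁻¹ h j :=
            Finset.sum_congr rfl fun h _ => by rw [key h]
        _ = μ⁻¹ i j := by simp [Matrix.one_apply, ite_mul, zero_mul]
    -- hc7 manipulation
    rw [hSinv] at hc7
    obtain ⟨Amat, hAdef⟩ : ∃ A : Mat2 n, A = t1 (Pmat n * (R⁻¹ * Pmat n)) * kron 1 μ :=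
      ⟨_, rfl⟩
    obtain ⟨Bmat, hBdef⟩ : ∃ B : Mat2 n, B = t1 (Pmat n * R * Pmat n) * kron 1 μ⁻¹ :=
      ⟨_, rfl⟩
    rw [← hAdef] at hc7
    rw [Matrix.mul_assoc] at hc7
    rw [← hBdef] at hc7
    have hBA : Bmat * Amat = 1 := mul_eq_one_comm.mp hc7
    have hAe : ∀ c d g h : Fin n, Amat (c,d) (g,h) = ∑ f, R⁻¹ (d,g) (f,c) * μ f h := by
      intro c d g h
      rw [hAdef, mul_kron_one_apply]
      refine Finset.sum_congr rfl fun f _ => ?_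
      congr 1
      show t1 (Pmat n * (R⁻¹ * Pmat n)) (c,d) (g,f) = R⁻¹ (d,g) (f,c)
      simp only [t1, Matrix.of_apply]
      rw [Pmat_mul_apply, mul_Pmat_apply]
    have hBe : ∀ a b c d : Fin n, Bmat (a,b) (c,d) = ∑ l, R (b,c) (l,a) * μ⁻¹ l d := by
      intro a b c d
      rw [hBdef, mul_kron_one_apply]
      refine Finset.sum_congr rfl fun l _ => ?_
      congr 1
      show t1 (Pmat n * R * Pmat n) (a,b) (c,l) = R (b,c) (l,a)
      simp only [t1, Matrix.of_apply]
      rw [mul_Pmat_apply, Pmat_mul_apply]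
    have key2 : ∀ c d : Fin n, ∑ a, ∑ b, μ a b * Bmat (a,b) (c,d) = μ⁻¹ c d := by
      intro c d
      have inner : ∀ l : Fin n, ∑ a, ∑ b, μ a b * R (b,c) (l,a) = (1 : Mat1 n) c l := by
        intro l
        rw [Finset.sum_comm, ← hT1 c l]
        exact Finset.sum_congr rfl fun b _ => Finset.sum_congr rfl fun a _ => mul_comm _ _
      calc ∑ a, ∑ b, μ a b * Bmat (a,b) (c,d)
          = ∑ a, ∑ b, ∑ l, μ a b * R (b,c) (l,a) * μ⁻¹ l d := by
            refine Finset.sum_congr rfl fun a _ => Finset.sum_congr rfl fun b _ => ?_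
            rw [hBe, Finset.mul_sum]
            exact Finset.sum_congr rfl fun l _ => (mul_assoc _ _ _).symm
        _ = ∑ l, ∑ a, ∑ b, μ a b * R (b,c) (l,a) * μ⁻¹ l d := sum_rot3 _
        _ = ∑ l, (∑ a, ∑ b, μ a b * R (b,c) (l,a)) * μ⁻¹ l d := by
            refine Finset.sum_congr rfl fun l _ => ?_
            rw [Finset.sum_mul]
            exact Finset.sum_congr rfl fun a _ => (Finset.sum_mul _ _ _).symm
        _ = ∑ l, (1 : Mat1 n) c l * μ⁻¹ l d :=
            Finset.sum_congr rfl fun l _ => by rw [inner l]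
        _ = μ⁻¹ c d := by simp [Matrix.one_apply, ite_mul, zero_mul]
    have key3 : ∀ g h : Fin n, ∑ c, ∑ d, μ⁻¹ c d * Amat (c,d) (g,h) = μ g h := by
      intro g h
      rw [← mu_contract μ Bmat Amat hBA g h]
      exact Finset.sum_congr rfl fun c _ => Finset.sum_congr rfl fun d _ => by rw [key2]
    have hWrow : ∀ g h : Fin n,
        ∑ k, (∑ c, ∑ d, μ⁻¹ c d * R⁻¹ (d,g) (k,c)) * μ k h = μ g h := by
      intro g h
      rw [← key3 g h]
      calc ∑ k, (∑ c, ∑ d, μ⁻¹ c d * R⁻¹ (d,g) (k,c)) * μ k h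
          = ∑ k, ∑ c, ∑ d, μ⁻¹ c d * R⁻¹ (d,g) (k,c) * μ k h := by
            refine Finset.sum_congr rfl fun k _ => ?_
            rw [Finset.sum_mul]
            exact Finset.sum_congr rfl fun c _ => Finset.sum_mul _ _ _
        _ = ∑ c, ∑ d, ∑ k, μ⁻¹ c d * R⁻¹ (d,g) (k,c) * μ k h := (sum_rot3 _).symm
        _ = ∑ c, ∑ d, μ⁻¹ c d * Amat (c,d) (g,h) := by
            refine Finset.sum_congr rfl fun c _ => Finset.sum_congr rfl fun d _ => ?_
            rw [hAe, Finset.mul_sum]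
            exact Finset.sum_congr rfl fun k _ => by ring
    have hW1 : (Matrix.of fun g k => ∑ c, ∑ d, μ⁻¹ c d * R⁻¹ (d,g) (k,c) : Mat1 n) = 1 := by
      obtain ⟨W, hWdef⟩ : ∃ W : Mat1 n,
          W = (Matrix.of fun g k => ∑ c, ∑ d, μ⁻¹ c d * R⁻¹ (d,g) (k,c) : Mat1 n) := ⟨_, rfl⟩
      rw [← hWdef]
      have hWμ : W * μ = μ := by
        ext g h
        rw [Matrix.mul_apply, ← hWrow g h]
        exact Finset.sum_congr rfl fun k _ => by rw [hWdef]; rfl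
      calc W = W * (μ * μ⁻¹) := by rw [hμinv, Matrix.mul_one]
        _ = W * μ * μ⁻¹ := by rw [Matrix.mul_assoc]
        _ = μ * μ⁻¹ := by rw [hWμ]
        _ = 1 := hμinv
    have hGe : ∀ g k : Fin n, ∑ c, ∑ d, μ⁻¹ c d * R⁻¹ (d,g) (k,c) = (1 : Mat1 n) g k :=
      fun g k => congrFun (congrFun hW1 g) k
    -- U = μ
    have hU : Umat R = μ := by
      ext i j
      show ∑ a, Rtil R (a,i) (j,a) = μ i j
      have hGe' : ∀ f : Fin n, ∑ a, ∑ h, R⁻¹ (a,f) (j,h) * μ⁻¹ h a = (1 : Mat1 n) f j := by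
        intro f
        calc ∑ a, ∑ h, R⁻¹ (a,f) (j,h) * μ⁻¹ h a
            = ∑ h, ∑ a, R⁻¹ (a,f) (j,h) * μ⁻¹ h a := Finset.sum_comm
          _ = ∑ h, ∑ a, μ⁻¹ h a * R⁻¹ (a,f) (j,h) :=
              Finset.sum_congr rfl fun h _ => Finset.sum_congr rfl fun a _ => mul_comm _ _
          _ = (1 : Mat1 n) f j := hGe f j
      calc ∑ a, Rtil R (a,i) (j,a)
          = ∑ a, ∑ h, (∑ f, μ i f * R⁻¹ (a,f) (j,h)) * μ⁻¹ h a :=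
            Finset.sum_congr rfl fun a _ => hRtilE a i j a
        _ = ∑ a, ∑ h, ∑ f, μ i f * R⁻¹ (a,f) (j,h) * μ⁻¹ h a := by
            refine Finset.sum_congr rfl fun a _ => Finset.sum_congr rfl fun h _ => ?_
            rw [Finset.sum_mul]
        _ = ∑ f, ∑ a, ∑ h, μ i f * R⁻¹ (a,f) (j,h) * μ⁻¹ h a := sum_rot3 _
        _ = ∑ f, μ i f * ∑ a, ∑ h, R⁻¹ (a,f) (j,h) * μ⁻¹ h a := by
            refine Finset.sum_congr rfl fun f _ => ?_
            rw [Finset.mul_sum]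
            refine Finset.sum_congr rfl fun a _ => ?_
            rw [Finset.mul_sum]
            exact Finset.sum_congr rfl fun h _ => by ring
        _ = ∑ f, μ i f * (1 : Mat1 n) f j := Finset.sum_congr rfl fun f _ => by rw [hGe' f]
        _ = μ i j := by simp [Matrix.one_apply, mul_ite, mul_zero]
    rw [hV, hU, hinvμ]
  · -- Case S = R * P
    intro ν h
    obtain ⟨hS, hν, -, -, htr1, htr2, hc7, hc8⟩ := h
    have hνdet : IsUnit ν.det := (Matrix.isUnit_iff_isUnit_det ν).mp hν
    have hνinv : ν * ν⁻¹ = 1 := Matrix.mul_nonsing_inv ν hνdet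
    have hinvν : ν⁻¹ * ν = 1 := Matrix.nonsing_inv_mul ν hνdet
    have hSinv : (R * Pmat n)⁻¹ = Pmat n * R⁻¹ := by
      apply Matrix.inv_eq_right_inv
      rw [Matrix.mul_assoc, ← Matrix.mul_assoc (Pmat n), Pmat_mul_Pmat, Matrix.one_mul,
        Matrix.mul_nonsing_inv R hRdet]
    have e1 : Pmat n * (R * Pmat n)⁻¹ = R⁻¹ := by
      rw [hSinv, ← Matrix.mul_assoc, Pmat_mul_Pmat, Matrix.one_mul]
    have e2 : R * Pmat n * Pmat n = R := by
      rw [Matrix.mul_assoc, Pmat_mul_Pmat, Matrix.mul_one]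
    rw [e1, e2] at hc7
    -- hc7 : t1 R⁻¹ * kron 1 ν * t1 R * kron 1 ν⁻¹ = 1
    rw [Matrix.mul_assoc] at hc7
    -- hc7 : (t1 R⁻¹ * kron 1 ν) * (t1 R * kron 1 ν⁻¹) = 1
    have hswap : t1 R * kron 1 ν⁻¹ * (t1 R⁻¹ * kron 1 ν) = 1 :=
      mul_eq_one_comm.mp hc7
    rw [Matrix.mul_assoc] at hswap
    -- hswap : t1 R * (kron 1 ν⁻¹ * (t1 R⁻¹ * kron 1 ν)) = 1
    have hUt1 : IsUnit (t1 R) := (Matrix.isUnit_iff_isUnit_det _).mpr (Matrix.isUnit_det_of_right_inverse hswap)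
    have hUt2 : IsUnit (t2 R) := by
      rw [t2_eq_t1_transpose, Matrix.isUnit_iff_isUnit_det, Matrix.det_transpose,
        ← Matrix.isUnit_iff_isUnit_det]
      exact hUt1
    refine ⟨⟨hR, hUt2⟩, ?_⟩
    have ht1Rinv : (t1 R)⁻¹ = kron 1 ν⁻¹ * (t1 R⁻¹ * kron 1 ν) :=
      Matrix.inv_eq_right_inv hswap
    have hRtil : Rtil R = kron 1 ν⁻¹ * R⁻¹ * kron 1 ν := by
      have h1 : (t2 R)⁻¹ = ((t1 R)⁻¹)ᵀ := by
        rw [t2_eq_t1_transpose]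
        exact (Matrix.transpose_nonsing_inv (t1 R)).symm
      unfold Rtil
      rw [h1, t2_transpose, ht1Rinv, kron_mul_t1, t1_mul_kron, t1_t1, ← Matrix.mul_assoc]
    have hRtilE : ∀ a b c d : Fin n, Rtil R (a,b) (c,d)
        = ∑ h, (∑ f, ν⁻¹ b f * R⁻¹ (a,f) (c,h)) * ν h d := by
      intro a b c d
      rw [hRtil, mul_kron_one_apply]
      exact Finset.sum_congr rfl fun h _ => by rw [kron_one_mul_apply]
    -- trace identities
    have hT1 : ∀ a c : Fin n, ∑ d, ∑ f, R (a,d) (f,c) * ν f d = (1 : Mat1 n) a c := by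
      intro a c
      have h := congrFun (congrFun htr1 a) c
      rw [← h]
      simp only [Tr2, Matrix.of_apply]
      refine Finset.sum_congr rfl fun d _ => ?_
      rw [mul_kron_one_apply]
      exact Finset.sum_congr rfl fun f _ => by rw [mul_Pmat_apply]
    have hT2 : ∀ a c : Fin n, ∑ d, ∑ f, R⁻¹ (d,a) (c,f) * ν f d = (1 : Mat1 n) a c := by
      intro a c
      have h := congrFun (congrFun htr2 a) c
      rw [hSinv] at h
      rw [← h]
      simp only [Tr2, Matrix.of_apply]
      refine Finset.sum_congr rfl fun d _ => ?_
      rw [mul_kron_one_apply]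
      exact Finset.sum_congr rfl fun f _ => by rw [Pmat_mul_apply]
    -- U = ν⁻¹
    have hU : Umat R = ν⁻¹ := by
      ext i j
      show ∑ a, Rtil R (a,i) (j,a) = ν⁻¹ i j
      calc ∑ a, Rtil R (a,i) (j,a)
          = ∑ a, ∑ h, (∑ f, ν⁻¹ i f * R⁻¹ (a,f) (j,h)) * ν h a :=
            Finset.sum_congr rfl fun a _ => hRtilE a i j a
        _ = ∑ a, ∑ h, ∑ f, ν⁻¹ i f * R⁻¹ (a,f) (j,h) * ν h a := by
            refine Finset.sum_congr rfl fun a _ => Finset.sum_congr rfl fun h _ => ?_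
            rw [Finset.sum_mul]
        _ = ∑ f, ∑ a, ∑ h, ν⁻¹ i f * R⁻¹ (a,f) (j,h) * ν h a := sum_rot3 _
        _ = ∑ f, ν⁻¹ i f * ∑ a, ∑ h, R⁻¹ (a,f) (j,h) * ν h a := by
            refine Finset.sum_congr rfl fun f _ => ?_
            rw [Finset.mul_sum]
            refine Finset.sum_congr rfl fun a _ => ?_
            rw [Finset.mul_sum]
            exact Finset.sum_congr rfl fun h _ => by ring
        _ = ∑ f, ν⁻¹ i f * (1 : Mat1 n) f j :=
            Finset.sum_congr rfl fun f _ => by rw [hT2 f j]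
        _ = ν⁻¹ i j := by simp [Matrix.one_apply, mul_ite, mul_zero]
    -- hc8 manipulation
    rw [hSinv, ← Matrix.mul_assoc (Pmat n) R (Pmat n)] at hc8
    -- hc8 : t1 (Pmat n * R * Pmat n) * kron 1 ν * t1 (Pmat n * R⁻¹ * Pmat n) * kron 1 ν⁻¹ = 1
    obtain ⟨Amat, hAdef⟩ : ∃ A : Mat2 n, A = t1 (Pmat n * R * Pmat n) * kron 1 ν :=
      ⟨_, rfl⟩
    obtain ⟨Bmat, hBdef⟩ : ∃ B : Mat2 n, B = t1 (Pmat n * R⁻¹ * Pmat n) * kron 1 ν⁻¹ :=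
      ⟨_, rfl⟩
    rw [← hAdef] at hc8
    rw [Matrix.mul_assoc] at hc8
    rw [← hBdef] at hc8
    have hBA : Bmat * Amat = 1 := mul_eq_one_comm.mp hc8
    have hAe : ∀ c d g h : Fin n, Amat (c,d) (g,h) = ∑ l, R (d,g) (l,c) * ν l h := by
      intro c d g h
      rw [hAdef, mul_kron_one_apply]
      refine Finset.sum_congr rfl fun l _ => ?_
      congr 1
      show t1 (Pmat n * R * Pmat n) (c,d) (g,l) = R (d,g) (l,c)
      simp only [t1, Matrix.of_apply]
      rw [mul_Pmat_apply, Pmat_mul_apply]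
    have hBe : ∀ a b c d : Fin n, Bmat (a,b) (c,d) = ∑ l, R⁻¹ (b,c) (l,a) * ν⁻¹ l d := by
      intro a b c d
      rw [hBdef, mul_kron_one_apply]
      refine Finset.sum_congr rfl fun l _ => ?_
      congr 1
      show t1 (Pmat n * R⁻¹ * Pmat n) (a,b) (c,l) = R⁻¹ (b,c) (l,a)
      simp only [t1, Matrix.of_apply]
      rw [mul_Pmat_apply, Pmat_mul_apply]
    have key2 : ∀ c d : Fin n, ∑ g, Amat (c,d) (g,g) = (1 : Mat1 n) d c := by
      intro c d
      calc ∑ g, Amat (c,d) (g,g)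
          = ∑ g, ∑ l, R (d,g) (l,c) * ν l g := Finset.sum_congr rfl fun g _ => hAe c d g g
        _ = (1 : Mat1 n) d c := hT1 d c
    have key3 : ∀ a b : Fin n, ∑ c, Bmat (a,b) (c,c) = if a = b then (1:ℂ) else 0 := by
      intro a b
      have h0 := trace_contract Bmat Amat hBA a b
      rw [← h0]
      calc ∑ c, Bmat (a,b) (c,c)
          = ∑ c, ∑ d, Bmat (a,b) (c,d) * (1 : Mat1 n) d c := by
            refine Finset.sum_congr rfl fun c _ => ?_
            simp [Matrix.one_apply, mul_ite, mul_zero]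
        _ = ∑ c, ∑ d, Bmat (a,b) (c,d) * ∑ g, Amat (c,d) (g,g) := by
            refine Finset.sum_congr rfl fun c _ => Finset.sum_congr rfl fun d _ => ?_
            rw [key2]
        _ = ∑ c, ∑ d, ∑ g, Bmat (a,b) (c,d) * Amat (c,d) (g,g) := by
            refine Finset.sum_congr rfl fun c _ => Finset.sum_congr rfl fun d _ => ?_
            rw [Finset.mul_sum]
        _ = ∑ g, ∑ c, ∑ d, Bmat (a,b) (c,d) * Amat (c,d) (g,g) := sum_rot3 _
    -- V = ν
    have hV : Vmat R = ν := by
      ext i j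
      show ∑ a, Rtil R (i,a) (a,j) = ν i j
      have key : ∀ h : Fin n, ∑ a, ∑ f, ν⁻¹ a f * R⁻¹ (i,f) (a,h) = if h = i then (1:ℂ) else 0 := by
        intro h
        calc ∑ a, ∑ f, ν⁻¹ a f * R⁻¹ (i,f) (a,h)
            = ∑ f, ∑ a, ν⁻¹ a f * R⁻¹ (i,f) (a,h) := Finset.sum_comm
          _ = ∑ f, ∑ a, R⁻¹ (i,f) (a,h) * ν⁻¹ a f :=
              Finset.sum_congr rfl fun f _ => Finset.sum_congr rfl fun a _ => mul_comm _ _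
          _ = ∑ f, Bmat (h,i) (f,f) := Finset.sum_congr rfl fun f _ => (hBe h i f f).symm
          _ = if h = i then 1 else 0 := key3 h i
      calc ∑ a, Rtil R (i,a) (a,j)
          = ∑ a, ∑ h, (∑ f, ν⁻¹ a f * R⁻¹ (i,f) (a,h)) * ν h j :=
            Finset.sum_congr rfl fun a _ => hRtilE i a a j
        _ = ∑ h, ∑ a, (∑ f, ν⁻¹ a f * R⁻¹ (i,f) (a,h)) * ν h j := Finset.sum_comm
        _ = ∑ h, (∑ a, ∑ f, ν⁻¹ a f * R⁻¹ (i,f) (a,h)) * ν h j :=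
            Finset.sum_congr rfl fun h _ => (Finset.sum_mul _ _ _).symm
        _ = ∑ h, (if h = i then (1:ℂ) else 0) * ν h j :=
            Finset.sum_congr rfl fun h _ => by rw [key h]
        _ = ν i j := by simp
    rw [hV, hU, hνinv]


end

end Enhance
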